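/- Let c ≥ 1 and let R = ℤ[ν]/(2^c·ν, ν² + 2ν). The additive subgroup of R generated by ν is cyclic of order 2^c; that is, m·ν = 0 in R if and only if 2^c divides m. -/

import Mathlib

theorem stmt_5 (c : ℕ) (hc : 1 ≤ c) :
    let R := Polynomial ℤ ⧸ Ideal.span
      ({(2 : Polynomial ℤ) ^ c * Polynomial.X, Polynomial.X ^ 2 + 2 * Polynomial.X} :
        Set (Polynomial ℤ))
    let ν : R := Ideal.Quotient.mk _ Polynomial.X
    ∀ m : ℤ, m • ν = 0 ↔ (2 : ℤ) ^ c ∣ m := by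
  intro R ν m
  set I := Ideal.span
      ({(2 : Polynomial ℤ) ^ c * Polynomial.X, Polynomial.X ^ 2 + 2 * Polynomial.X} :
        Set (Polynomial ℤ)) with hI
  have hsmul : m • ν = Ideal.Quotient.mk I (m • Polynomial.X) := by
    simp [ν]
    rfl
  rw [hsmul, Ideal.Quotient.eq_zero_iff_mem]
  constructor
  · intro h
    set n : ℕ := 2 ^ (c + 1) with hn
    have hn0 : (n : ℕ) ≠ 0 := by positivity
    let f : Polynomial ℤ →+* ZMod n := (Polynomial.aeval (-2 : ZMod n)).toRingHom
    have hker : I ≤ RingHom.ker f := by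
      rw [hI, Ideal.span_le]
      rintro p (rfl | rfl) <;>
        simp only [SetLike.mem_coe, RingHom.mem_ker, f, AlgHom.toRingHom_eq_coe,
          RingHom.coe_coe]
      · rw [map_mul, Polynomial.aeval_X, map_pow, map_ofNat]
        have h5 : ((2 : ZMod n) ^ c * (-2)) = -(((2 ^ (c + 1) : ℕ) : ZMod n)) := by
          push_cast; ring
        rw [h5, ← hn, ZMod.natCast_self, neg_zero]
      · rw [map_add, map_mul, map_pow, Polynomial.aeval_X, map_ofNat]
        ring
    have h0 : f (m • Polynomial.X) = 0 := hker h
    have h1 : ((m * (-2) : ℤ) : ZMod n) = 0 := by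
      simpa [f, Polynomial.smul_eq_C_mul] using h0
    have h2 : (n : ℤ) ∣ m * (-2) := by
      exact_mod_cast (ZMod.intCast_zmod_eq_zero_iff_dvd _ _).mp h1
    have h3 : (2 : ℤ) ^ (c + 1) ∣ m * 2 := by
      have h := h2
      rw [hn] at h
      push_cast at h
      rw [show m * (-2) = -(m * 2) by ring] at h
      exact dvd_neg.mp h
    rw [pow_succ] at h3
    exact (mul_dvd_mul_iff_right (two_ne_zero)).mp h3
  · rintro ⟨k, rfl⟩
    have hmem : ((2 : Polynomial ℤ) ^ c * Polynomial.X) ∈ I :=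
      Ideal.subset_span (Or.inl rfl)
    have : (2 ^ c * k : ℤ) • Polynomial.X =
        Polynomial.C k * ((2 : Polynomial ℤ) ^ c * Polynomial.X) := by
      rw [Polynomial.smul_eq_C_mul, map_mul, map_pow,
        show (Polynomial.C (2 : ℤ)) = 2 by norm_num]
      ring
    rw [this]
    exact Ideal.mul_mem_left _ _ hmem
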